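/- The set σ[D] = {σ(d) : d ∈ D} is contained in K and is dense in K. -/

import Mathlib

open Set Topology

/-- The Cantor space `2^ℕ`, with coordinates indexed by the positive integers. -/
abbrev Cant : Type := ℕ+ → Bool

/-- The support of a point of the Cantor space, as a set of (positive) natural numbers. -/
def ksupp (x : Cant) : Set ℕ := {i | ∃ h : 0 < i, x ⟨i, h⟩ = true}

/-- The plane. -/
abbrev Plane : Type := EuclideanSpace ℝ (Fin 2)

/-- `N_d = max supp d` (with `sSup ∅ = 0` for the zero point). -/
noncomputable def Nd (d : Cant) : ℕ := sSup (ksupp d)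

/-- The basic clopen set `V_d = {y : y(i) = d(i) for 1 ≤ i ≤ N_d}`. -/
noncomputable def Vd (d : Cant) : Set Cant :=
  {y | ∀ i : ℕ+, (i : ℕ) ≤ Nd d → y i = d i}

/-- The set `D_d` of children of `d ∈ D`: the points of `D_{k_d+1}` agreeing with `d`
on the coordinates `1, …, N_d`. -/
noncomputable def Dch (d : Cant) : Set Cant :=
  {e | (ksupp e).Finite ∧ (ksupp e).ncard = (ksupp d).ncard + 1 ∧
    ∀ i : ℕ+, (i : ℕ) ≤ Nd d → e i = d i}

/-- The ball `W(d) = B(σ(d), 2^{−ℓ(d)})`. -/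
noncomputable def Wb (σ : Cant → Plane) (ℓ : Cant → ℕ) (d : Cant) : Set Plane :=
  Metric.ball (σ d) ((2 : ℝ) ^ (-(ℓ d : ℤ)))

/-- The ball `U(d) = B(σ(d), 2^{−ℓ(d)−1})`. -/
noncomputable def Ub (σ : Cant → Plane) (ℓ : Cant → ℕ) (d : Cant) : Set Plane :=
  Metric.ball (σ d) ((2 : ℝ) ^ (-(ℓ d : ℤ) - 1))

/-- The resulting Cantor set `K = ⋂_n cl (⋃ {W(d) : d ∈ D_n})`. -/
noncomputable def Kset (σ : Cant → Plane) (ℓ : Cant → ℕ) : Set Plane :=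
  ⋂ n : ℕ, closure (⋃ d ∈ {d : Cant | (ksupp d).Finite ∧ (ksupp d).ncard = n}, Wb σ ℓ d)

/-- The closed set `F(d) = cl U(d) \ ⋃_{e ∈ D_d} W(e)`. -/
noncomputable def Fd (σ : Cant → Plane) (ℓ : Cant → ℕ) (d : Cant) : Set Plane :=
  closure (Ub σ ℓ d) \ ⋃ e ∈ Dch d, Wb σ ℓ e

/-- The three conditions imposed on the maps `σ : D → ℝ²` and `ℓ : D → ω`:
(1) `⟨σ(e) : e ∈ D_d⟩` converges to `σ(d)` (in the sense that `σ(e)` is close to `σ(d)`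
    once the added support element `N_e` of the child `e` is large);
(2) `cl W(e) ⊆ U(d) \ {σ(d)}` whenever `e ∈ D_d`;
(3) `{cl W(d) : d ∈ D_n}` is pairwise disjoint for every `n`. -/
def CantorConds (σ : Cant → Plane) (ℓ : Cant → ℕ) : Prop :=
  (∀ d : Cant, (ksupp d).Finite → ∀ ε > (0 : ℝ), ∃ M : ℕ, ∀ e ∈ Dch d,
      M ≤ Nd e → dist (σ e) (σ d) < ε) ∧
  (∀ d : Cant, (ksupp d).Finite → ∀ e ∈ Dch d,
      closure (Wb σ ℓ e) ⊆ Ub σ ℓ d \ {σ d}) ∧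
  (∀ n : ℕ, ∀ d e : Cant, (ksupp d).Finite → (ksupp d).ncard = n →
      (ksupp e).Finite → (ksupp e).ncard = n → d ≠ e →
      Disjoint (closure (Wb σ ℓ d)) (closure (Wb σ ℓ e)))


section Helpers

variable (σ : Cant → Plane) (ℓ : Cant → ℕ)

lemma le_Nd {x : Cant} (hf : (ksupp x).Finite) {i : ℕ} (h : i ∈ ksupp x) : i ≤ Nd x :=
  le_csSup hf.bddAbove h

/-- Flip coordinate `m` of `d` to `true`. -/
def cflip (d : Cant) (m : ℕ+) : Cant := fun i => if i = m then true else d i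

lemma ksupp_cflip (d : Cant) (m : ℕ+) : ksupp (cflip d m) = insert (m : ℕ) (ksupp d) := by
  ext i
  simp only [Set.mem_insert_iff, ksupp, Set.mem_setOf_eq, cflip]
  constructor
  · rintro ⟨h, hx⟩
    split_ifs at hx with he
    · left; simpa using congrArg (fun x : ℕ+ => (x : ℕ)) he
    · right; exact ⟨h, hx⟩
  · rintro (rfl | ⟨h, hx⟩)
    · refine ⟨m.pos, ?_⟩
      split_ifs with he
      · rfl
      · exact absurd (Subtype.ext rfl) he
    · refine ⟨h, ?_⟩
      split_ifs with he
      · rfl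
      · exact hx

lemma Nd_cflip (d : Cant) (m : ℕ+) (hf : (ksupp d).Finite) (hm : Nd d ≤ (m : ℕ)) :
    Nd (cflip d m) = (m : ℕ) := by
  rw [Nd, ksupp_cflip]
  apply le_antisymm
  · apply csSup_le ⟨_, Set.mem_insert _ _⟩
    rintro j (rfl | hj)
    · exact le_rfl
    · exact (le_Nd hf hj).trans hm
  · exact le_csSup ((hf.insert _).bddAbove) (Set.mem_insert _ _)

lemma cflip_mem_Dch (d : Cant) (m : ℕ+) (hf : (ksupp d).Finite) (hm : Nd d < (m : ℕ)) :
    cflip d m ∈ Dch d := by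
  have hnot : (m : ℕ) ∉ ksupp d := fun h => absurd (le_Nd hf h) (not_le.mpr hm)
  refine ⟨by rw [ksupp_cflip]; exact hf.insert _, ?_, ?_⟩
  · rw [ksupp_cflip, Set.ncard_insert_of_notMem hnot hf]
  · intro i hi
    have : i ≠ m := by
      intro h; subst h; exact absurd hi (not_le.mpr hm)
    simp [cflip, this]

/-- The parent of `d`: erase the top support element. -/
noncomputable def cpar (d : Cant) : Cant := fun i => if (i : ℕ) = Nd d then false else d i

lemma ksupp_cpar (d : Cant) : ksupp (cpar d) = ksupp d \ {Nd d} := by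
  ext i
  simp only [ksupp, Set.mem_setOf_eq, Set.mem_diff, Set.mem_singleton_iff, cpar]
  constructor
  · rintro ⟨h, hx⟩
    split_ifs at hx with he
    exact ⟨⟨h, hx⟩, he⟩
  · rintro ⟨⟨h, hx⟩, he⟩
    refine ⟨h, ?_⟩
    split_ifs with he2
    · exact absurd he2 he
    · exact hx

lemma Nd_cpar_lt (d : Cant) (hf : (ksupp d).Finite) (hne : (ksupp d).Nonempty) :
    Nd (cpar d) < Nd d := by
  have hN : Nd d ∈ ksupp d := Nat.sSup_mem hne hf.bddAbove
  obtain ⟨hNpos, -⟩ := hN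
  rw [Nd, ksupp_cpar]
  rcases Set.eq_empty_or_nonempty (ksupp d \ {Nd d}) with h | h
  · rw [h]; simpa using hNpos
  · have hmem := Nat.sSup_mem h ((hf.diff).bddAbove)
    exact lt_of_le_of_ne (le_Nd hf hmem.1) hmem.2

lemma cpar_finite (d : Cant) (hf : (ksupp d).Finite) : (ksupp (cpar d)).Finite := by
  rw [ksupp_cpar]; exact hf.diff

lemma cpar_ncard (d : Cant) (hf : (ksupp d).Finite) (hne : (ksupp d).Nonempty) :
    (ksupp (cpar d)).ncard + 1 = (ksupp d).ncard := by
  rw [ksupp_cpar]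
  exact Set.ncard_diff_singleton_add_one (Nat.sSup_mem hne hf.bddAbove) hf

lemma mem_Dch_cpar (d : Cant) (hf : (ksupp d).Finite) (hne : (ksupp d).Nonempty) :
    d ∈ Dch (cpar d) := by
  refine ⟨hf, (cpar_ncard d hf hne).symm, ?_⟩
  intro i hi
  have : (i : ℕ) ≠ Nd d := by
    intro h
    exact absurd hi (by rw [h]; exact not_le.mpr (Nd_cpar_lt d hf hne))
  simp [cpar, this]

lemma radius_lt {d e : Cant}
    (h2 : closure (Wb σ ℓ e) ⊆ Ub σ ℓ d \ {σ d}) :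
    (2 : ℝ) ^ (-(ℓ e : ℤ)) < (2 : ℝ) ^ (-(ℓ d : ℤ) - 1) := by
  set r : ℝ := 2 ^ (-(ℓ e : ℤ)) with hr
  have hrpos : 0 < r := by positivity
  have hσe : σ e ∈ closure (Wb σ ℓ e) := subset_closure (Metric.mem_ball_self hrpos)
  have hne : σ e ≠ σ d := (h2 hσe).2
  set v : Plane := σ e - σ d with hv'
  have hv : 0 < ‖v‖ := by
    rw [norm_pos_iff]
    exact sub_ne_zero.mpr hne
  set y : Plane := σ e + (r / ‖v‖) • v with hy'
  have hy1 : y ∈ closure (Wb σ ℓ e) := by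
    rw [Wb, closure_ball _ (ne_of_gt hrpos)]
    simp only [Metric.mem_closedBall, hy', dist_eq_norm]
    rw [add_sub_cancel_left, norm_smul, Real.norm_eq_abs]
    rw [abs_of_pos (div_pos hrpos hv)]
    rw [div_mul_cancel₀ _ (ne_of_gt hv)]
  have hy2 := (h2 hy1).1
  rw [Ub, Metric.mem_ball, dist_eq_norm] at hy2
  have hrepr : y - σ d = (1 + r / ‖v‖) • v := by
    rw [hy', hv']
    module
  have hnorm : ‖y - σ d‖ = ‖v‖ + r := by
    rw [hrepr, norm_smul, Real.norm_eq_abs, abs_of_pos (by positivity), add_mul, one_mul,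
      div_mul_cancel₀ _ (ne_of_gt hv), add_comm]
  calc r ≤ ‖v‖ + r := le_add_of_nonneg_left (le_of_lt hv)
    _ < _ := by rw [← hnorm]; exact hy2

lemma radius_le (hc : CantorConds σ ℓ) :
    ∀ n, ∀ d : Cant, (ksupp d).Finite → (ksupp d).ncard = n →
      (2 : ℝ) ^ (-(ℓ d : ℤ)) ≤ 2 ^ (-(n : ℤ)) := by
  intro n
  induction n with
  | zero =>
    intro d _ _
    apply zpow_le_zpow_right₀ one_le_two
    simp
  | succ n ih =>
    intro d hf hk
    have hne : (ksupp d).Nonempty := by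
      rw [Set.nonempty_iff_ne_empty]
      intro h
      rw [h] at hk; simp at hk
    have hpf := cpar_finite d hf
    have hpk : (ksupp (cpar d)).ncard = n := by
      have := cpar_ncard d hf hne
      omega
    have h2 := hc.2.1 (cpar d) hpf d (mem_Dch_cpar d hf hne)
    have hlt := radius_lt σ ℓ h2
    have hle := ih (cpar d) hpf hpk
    have h1 : (2 : ℝ) ^ (-(ℓ (cpar d) : ℤ) - 1) ≤ 2 ^ (-(n : ℤ) - 1) := by
      rw [sub_eq_add_neg, sub_eq_add_neg, zpow_add₀ (two_ne_zero), zpow_add₀ (two_ne_zero)]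
      exact mul_le_mul_of_nonneg_right hle (by positivity)
    have h3 : (-(n : ℤ) - 1) = (-((n + 1 : ℕ) : ℤ)) := by push_cast; ring
    rw [h3] at h1
    exact le_of_lt (lt_of_lt_of_le hlt h1)

/-- The `n`-th level union. -/
noncomputable def lev (n : ℕ) : Set Plane :=
  ⋃ d ∈ {d : Cant | (ksupp d).Finite ∧ (ksupp d).ncard = n}, Wb σ ℓ d

lemma Kset_eq : Kset σ ℓ = ⋂ n : ℕ, closure (lev σ ℓ n) := rfl

lemma mem_lev {d : Cant} (hf : (ksupp d).Finite) {x : Plane} (hx : x ∈ Wb σ ℓ d) :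
    x ∈ lev σ ℓ ((ksupp d).ncard) := by
  exact Set.mem_biUnion ⟨hf, rfl⟩ hx

lemma sigma_mem_upper (hc : CantorConds σ ℓ) :
    ∀ m, ∀ d : Cant, (ksupp d).Finite →
      σ d ∈ closure (lev σ ℓ ((ksupp d).ncard + m)) := by
  intro m
  induction m with
  | zero =>
    intro d hf
    exact subset_closure (mem_lev σ ℓ hf (Metric.mem_ball_self (by positivity)))
  | succ m ih =>
    intro d hf
    rw [show (ksupp d).ncard + (m + 1) = (ksupp d).ncard + 1 + m by ring]
    rw [Metric.mem_closure_iff]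
    intro ε hε
    obtain ⟨M, hM⟩ := hc.1 d hf (ε / 2) (by linarith)
    set m' : ℕ+ := ⟨max (Nd d) M + 1, Nat.succ_pos _⟩ with hm'def
    have hm1 : Nd d < (m' : ℕ) := lt_of_le_of_lt (le_max_left _ _) (Nat.lt_succ_self _)
    set e := cflip d m' with he'
    have heD : e ∈ Dch d := cflip_mem_Dch d m' hf hm1
    have hNe : Nd e = (m' : ℕ) := Nd_cflip d m' hf (le_of_lt hm1)
    have hdist : dist (σ e) (σ d) < ε / 2 := by
      apply hM e heD
      rw [hNe]
      exact le_trans (le_max_right _ _) (Nat.le_succ _)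
    have hef : (ksupp e).Finite := heD.1
    have hek : (ksupp e).ncard = (ksupp d).ncard + 1 := heD.2.1
    have hcl := ih e hef
    rw [hek, Metric.mem_closure_iff] at hcl
    obtain ⟨y, hy, hdy⟩ := hcl (ε / 2) (by linarith)
    refine ⟨y, hy, ?_⟩
    calc dist (σ d) y ≤ dist (σ d) (σ e) + dist (σ e) y := dist_triangle _ _ _
      _ < ε / 2 + ε / 2 := by
          rw [dist_comm (σ d) (σ e)]
          exact add_lt_add hdist hdy
      _ = ε := by ring

lemma ancestor (hc : CantorConds σ ℓ) :
    ∀ k, ∀ d : Cant, (ksupp d).Finite → (ksupp d).ncard = k →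
      ∀ n ≤ k, ∃ a : Cant, (ksupp a).Finite ∧ (ksupp a).ncard = n ∧
        Wb σ ℓ d ⊆ Wb σ ℓ a := by
  intro k
  induction k with
  | zero =>
    intro d hf hk n hn
    interval_cases n
    exact ⟨d, hf, hk, subset_rfl⟩
  | succ k ih =>
    intro d hf hk n hn
    rcases eq_or_lt_of_le hn with rfl | hn'
    · exact ⟨d, hf, hk, subset_rfl⟩
    · have hne : (ksupp d).Nonempty := by
        rw [Set.nonempty_iff_ne_empty]
        intro h
        rw [h] at hk; simp at hk
      have hpf := cpar_finite d hf
      have hpk : (ksupp (cpar d)).ncard = k := by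
        have := cpar_ncard d hf hne
        omega
      obtain ⟨a, ha1, ha2, ha3⟩ := ih (cpar d) hpf hpk n (by omega)
      refine ⟨a, ha1, ha2, ?_⟩
      have h2 := hc.2.1 (cpar d) hpf d (mem_Dch_cpar d hf hne)
      refine subset_trans ?_ ha3
      intro x hx
      have := (h2 (subset_closure hx)).1
      rw [Ub, Metric.mem_ball] at this
      rw [Wb, Metric.mem_ball]
      exact lt_of_lt_of_le this (zpow_le_zpow_right₀ one_le_two (by omega))

end Helpers

/-- The set `σ[D]` is contained in `K` and is dense in `K`. -/
theorem sigma_image_subset_and_dense (σ : Cant → Plane) (ℓ : Cant → ℕ)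
    (hc : CantorConds σ ℓ) :
    σ '' {d : Cant | (ksupp d).Finite} ⊆ Kset σ ℓ ∧
      Kset σ ℓ ⊆ closure (σ '' {d : Cant | (ksupp d).Finite}) := by
  constructor
  · rintro x ⟨d, hd, rfl⟩
    rw [Kset_eq, Set.mem_iInter]
    intro n
    rcases le_or_gt n ((ksupp d).ncard) with h | h
    · obtain ⟨a, ha1, ha2, ha3⟩ := ancestor σ ℓ hc ((ksupp d).ncard) d hd rfl n h
      apply subset_closure
      rw [← ha2]
      exact mem_lev σ ℓ ha1 (ha3 (Metric.mem_ball_self (by positivity)))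
    · obtain ⟨m, rfl⟩ := Nat.exists_eq_add_of_le (le_of_lt h)
      exact sigma_mem_upper σ ℓ hc m d hd
  · intro x hx
    rw [Metric.mem_closure_iff]
    intro ε hε
    obtain ⟨n, hn⟩ := exists_pow_lt_of_lt_one (show (0:ℝ) < ε/2 by linarith)
      (show (1:ℝ)/2 < 1 by norm_num)
    have hn' : (2 : ℝ) ^ (-(n : ℤ)) < ε / 2 := by
      have : ((1:ℝ)/2) ^ n = (2:ℝ) ^ (-(n:ℤ)) := by
        rw [zpow_neg, zpow_natCast, one_div, inv_pow]
      rwa [this] at hn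
    rw [Kset_eq, Set.mem_iInter] at hx
    have := hx n
    rw [Metric.mem_closure_iff] at this
    obtain ⟨y, hy, hdy⟩ := this (ε / 2) (by linarith)
    rw [lev, Set.mem_iUnion₂] at hy
    obtain ⟨d, ⟨hdf, hdn⟩, hyd⟩ := hy
    subst hdn
    refine ⟨σ d, ⟨d, hdf, rfl⟩, ?_⟩
    have h1 : dist y (σ d) < (2:ℝ) ^ (-((ksupp d).ncard : ℤ)) := by
      rw [Wb, Metric.mem_ball] at hyd
      exact lt_of_lt_of_le hyd (radius_le σ ℓ hc _ d hdf rfl)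
    calc dist x (σ d) ≤ dist x y + dist y (σ d) := dist_triangle _ _ _
      _ < ε / 2 + ε / 2 := add_lt_add hdy (lt_trans h1 hn')
      _ = ε := by ring
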